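/- The leader (Frobenius number) of any proper maximum sparse ideal of a numerical semigroup S is at least the conductor of S. -/

import Mathlib

/-- A numerical semigroup: a subset of ℕ containing 0, closed under addition,
with finite complement. -/
def IsNumSemigroup (S : Set ℕ) : Prop :=
  0 ∈ S ∧ (∀ a ∈ S, ∀ b ∈ S, a + b ∈ S) ∧ Sᶜ.Finite

/-- An ideal of a numerical semigroup: `I ⊆ S` with `I + S ⊆ I` and `S \ I` finite. -/
def IsSemigroupIdeal (S I : Set ℕ) : Prop :=
  I ⊆ S ∧ (∀ a ∈ I, ∀ b ∈ S, a + b ∈ I) ∧ (S \ I).Finite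

/-- `Fb` is the Frobenius number of `I`: the largest integer not belonging to `I`. -/
def IsFrobenius (I : Set ℕ) (Fb : ℕ) : Prop :=
  Fb ∉ I ∧ ∀ k, Fb < k → k ∈ I

/-- An ideal is maximum sparse if its Frobenius number attains the bound
`2g - 1 + #(S \ I)`. -/
def IsMaxSparse (S I : Set ℕ) (g : ℕ) : Prop :=
  ∃ Fb : ℕ, IsFrobenius I Fb ∧ (Fb : ℤ) = 2 * g - 1 + (S \ I).ncard

/-- `c` is the conductor of `S`: the smallest integer with `c + ℕ ⊆ S`. -/
def IsConductor (S : Set ℕ) (c : ℕ) : Prop :=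
  (∀ k, c ≤ k → k ∈ S) ∧ ∀ c' : ℕ, (∀ k, c' ≤ k → k ∈ S) → c ≤ c'

/-- `D(c) = S ∩ (c - S)`: the nongaps `s` with `c - s` also a nongap. -/
def Dset (S : Set ℕ) (c : ℕ) : Set ℕ :=
  {s ∈ S | ∃ t ∈ S, s + t = c}

/-- The leader (Frobenius number) of a proper maximum sparse ideal is at least
the conductor of the numerical semigroup. -/
theorem leader_ge_conductor (S I : Set ℕ) (g c Fb : ℕ)
    (hS : IsNumSemigroup S) (hg : Sᶜ.ncard = g)
    (hc : IsConductor S c)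
    (hI : IsSemigroupIdeal S I) (hproper : I ≠ S)
    (hF : IsFrobenius I Fb) (hmax : (Fb : ℤ) = 2 * g - 1 + (S \ I).ncard) :
    c ≤ Fb := by
  classical
  obtain ⟨h0, hadd, hfin⟩ := hS
  obtain ⟨hIsub, hIadd, hSIfin⟩ := hI
  have hne : (S \ I).Nonempty := by
    rw [Set.diff_nonempty]
    intro hsub
    exact hproper (subset_antisymm hIsub hsub)
  have hn : 1 ≤ (S \ I).ncard := (Set.ncard_pos hSIfin).mpr hne
  have hFb2g : 2 * g ≤ Fb := by
    have hn' : (1 : ℤ) ≤ ((S \ I).ncard : ℤ) := by exact_mod_cast hn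
    have : (2 * g : ℤ) ≤ (Fb : ℤ) := by omega
    exact_mod_cast this
  have hc2g : c ≤ 2 * g := by
    rcases Nat.eq_zero_or_pos c with hc0 | hcpos
    · omega
    have hcm1 : c - 1 ∉ S := by
      intro h
      have hall : ∀ k, c - 1 ≤ k → k ∈ S := by
        intro k hk
        rcases eq_or_lt_of_le hk with rfl | hlt
        · exact h
        · exact hc.1 k (by omega)
      have := hc.2 (c - 1) hall
      omega
    set A := (Finset.range c).filter (· ∈ S) with hA
    set B := (Finset.range c).filter (· ∉ S) with hB
    have hcard : A.card + B.card = c := by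
      rw [hA, hB, Finset.card_filter_add_card_filter_not, Finset.card_range]
    have hBg : B.card ≤ g := by
      have hsub : (B : Set ℕ) ⊆ Sᶜ := by
        intro x hx
        simp only [hB, Finset.coe_filter, Set.mem_setOf_eq] at hx
        exact hx.2
      calc B.card = (B : Set ℕ).ncard := (Set.ncard_coe_finset B).symm
        _ ≤ Sᶜ.ncard := Set.ncard_le_ncard hsub hfin
        _ = g := hg
    have hAB : A.card ≤ B.card := by
      apply Finset.card_le_card_of_injOn (fun s => c - 1 - s)
      · intro s hs
        simp only [hA, Finset.mem_coe, Finset.mem_filter, Finset.mem_range] at hs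
        simp only [hB, Finset.mem_coe, Finset.mem_filter, Finset.mem_range]
        refine ⟨by omega, fun hmem => ?_⟩
        have hmemS : s + (c - 1 - s) ∈ S := hadd s hs.2 _ hmem
        have heq : s + (c - 1 - s) = c - 1 := by omega
        rw [heq] at hmemS
        exact hcm1 hmemS
      · intro s hs t ht h
        simp only [hA, Finset.coe_filter, Set.mem_setOf_eq, Finset.mem_range] at hs ht
        simp only at h
        omega
    omega
  omega
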